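/- For every g ∈ U(n) there exists a skew-Hermitian matrix ζ with exp(ζ) = g such that for every skew-Hermitian ξ with exp(ξ) = g one has [ζ, ξ] = 0. -/

import Mathlib

open Matrix Polynomial

section Aux

open scoped Matrix.Norms.L2Operator

noncomputable local instance matCSA (n : ℕ) : CStarAlgebra (Matrix (Fin n) (Fin n) ℂ) :=
  Matrix.instCStarAlgebra

private lemma commute_aeval {R A : Type*} [CommSemiring R] [Semiring A] [Algebra R A]
    {a b : A} (h : Commute a b) (q : R[X]) : Commute (Polynomial.aeval a q) b := by
  induction q using Polynomial.induction_on' with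
  | add p q hp hq => simpa [map_add] using hp.add_left hq
  | monomial k c =>
      rw [Polynomial.aeval_monomial]
      exact Commute.mul_left (Algebra.commutes c b) (h.pow_left k)

private theorem key (n : ℕ) (g : Matrix.unitaryGroup (Fin n) ℂ) :
    ∃ ζ : Matrix (Fin n) (Fin n) ℂ, ζᴴ = -ζ ∧
      NormedSpace.exp ζ = (g : Matrix (Fin n) (Fin n) ℂ) ∧
      ∀ ξ : Matrix (Fin n) (Fin n) ℂ, ξᴴ = -ξ →
        NormedSpace.exp ξ = (g : Matrix (Fin n) (Fin n) ℂ) → ζ * ξ - ξ * ζ = 0 := by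
  set M : Matrix (Fin n) (Fin n) ℂ := (g : Matrix (Fin n) (Fin n) ℂ) with hMdef
  have hM : IsStarNormal M := by
    constructor
    rw [Commute, SemiconjBy, (Unitary.mem_iff.mp g.2).1, (Unitary.mem_iff.mp g.2).2]
  have hsp : ∀ z ∈ spectrum ℂ M, ‖z‖ = 1 := by
    intro z hz
    have := Unitary.spectrum_subset_circle (𝕜 := ℂ) g hz
    simpa using Metric.mem_sphere.mp this
  have hfin : (spectrum ℂ M).Finite := Matrix.finite_spectrum M
  set q : ℂ[X] := Lagrange.interpolate hfin.toFinset id (fun z => Complex.I * z.arg) with hqdef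
  have hq : ∀ z ∈ spectrum ℂ M, q.eval z = Complex.I * z.arg := by
    intro z hz
    have hzs : z ∈ hfin.toFinset := hfin.mem_toFinset.mpr hz
    have := Lagrange.eval_interpolate_at_node (fun z : ℂ => Complex.I * z.arg)
      (Set.injOn_id _) hzs
    simp only [id_eq] at this
    rw [hqdef]
    exact this
  refine ⟨cfc q.eval M, ?_, ?_, ?_⟩
  · rw [← Matrix.star_eq_conjTranspose, ← cfc_star]
    calc cfc (fun z => star (q.eval z)) M
        = cfc (fun z => -(q.eval z)) M := by
          refine cfc_congr fun z hz => ?_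
          rw [hq z hz]
          simp [Complex.star_def, _root_.map_mul, Complex.conj_I, Complex.conj_ofReal]
      _ = -(cfc q.eval M) := cfc_neg _ _
  · rw [← CFC.complex_exp_eq_normedSpace_exp (cfc_predicate q.eval M),
      ← cfc_comp Complex.exp q.eval M hM Complex.continuous_exp.continuousOn
        q.continuous.continuousOn]
    have : (spectrum ℂ M).EqOn (Complex.exp ∘ q.eval) id := by
      intro z hz
      simp only [Function.comp_apply, id_eq]
      rw [hq z hz, mul_comm]
      have := Complex.norm_mul_exp_arg_mul_I z
      rwa [hsp z hz, Complex.ofReal_one, one_mul] at this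
    rw [cfc_congr this, cfc_id ℂ M]
  · intro ξ hξ hexp
    have hcomm : Commute M ξ := hexp ▸ ((Commute.refl ξ).exp_left)
    have h2 : Commute (cfc q.eval M) ξ := by
      rw [cfc_polynomial q M]
      exact commute_aeval hcomm q
    exact sub_eq_zero_of_eq h2.eq

end Aux

/-- For every `g ∈ U(n)` there exists a skew-Hermitian `ζ` with `exp ζ = g` commuting with
every skew-Hermitian `ξ` satisfying `exp ξ = g`. -/
theorem stmt_1 (n : ℕ) (g : Matrix.unitaryGroup (Fin n) ℂ) :
    ∃ ζ : Matrix (Fin n) (Fin n) ℂ, ζᴴ = -ζ ∧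
      NormedSpace.exp ζ = (g : Matrix (Fin n) (Fin n) ℂ) ∧
      ∀ ξ : Matrix (Fin n) (Fin n) ℂ, ξᴴ = -ξ →
        NormedSpace.exp ξ = (g : Matrix (Fin n) (Fin n) ℂ) → ζ * ξ - ξ * ζ = 0 := by
  exact key n g
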